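/- Let K̂ be a simplicial complex on a vertex set of size n̂ with dimension d−1 (d ≥ 1), and suppose V(K̂) = V ∪ V' where K := K̂[V] and K' := K̂[V'] are induced subcomplexes such that every face of K̂ is a face of K or a face of K'. Suppose K and K' each satisfy the Taylor upper bound. Let t = M̃_{n̂−d}(K̂) − (n̂−d) − 1 (this is a nonnegative integer). If |V ∩ V'| ≤ t + d − 1, then K̂ satisfies the Taylor upper bound. -/

import Mathlib

open Finset

/-- A simplicial complex on a finite vertex set: a collection of finite subsets
(faces) of the vertex set, closed under inclusion, containing every singleton. -/
structure SC (α : Type*) [DecidableEq α] where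
  verts : Finset α
  faces : Finset (Finset α)
  subset_verts : ∀ F ∈ faces, F ⊆ verts
  down_closed : ∀ F ∈ faces, ∀ G, G ⊆ F → G ∈ faces
  singleton_mem : ∀ v ∈ verts, {v} ∈ faces

namespace SC

variable {α : Type*} [DecidableEq α]

/-- `dimP1 K = dim K + 1`: the maximal number of vertices of a face. -/
def dimP1 (K : SC α) : ℕ := K.faces.sup Finset.card

/-- The number of faces with exactly `j` vertices, i.e. `f_{j-1}(K)`. -/
def fCard (K : SC α) (j : ℕ) : ℕ := (K.faces.filter (fun F => F.card = j)).card

/-- The minimal non-faces of `K`: subsets of the vertex set which are not faces,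
all of whose proper subsets are faces. -/
def minNonFaces (K : SC α) : Finset (Finset α) :=
  K.verts.powerset.filter (fun F => F ∉ K.faces ∧ ∀ G ∈ F.powerset, G ≠ F → G ∈ K.faces)

/-- The `i`-th minimal Taylor shift `m̃_i(K)`: the minimal number of vertices covered by
a set of exactly `i` minimal non-faces of `K`. -/
noncomputable def mT (K : SC α) (i : ℕ) : ℕ :=
  sInf {n | ∃ T ⊆ K.minNonFaces, T.card = i ∧ (T.sup id).card = n}

/-- The `i`-th maximal Taylor shift `M̃_i(K)`: the maximal number of vertices covered by
a set of exactly `i` minimal non-faces of `K`. -/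
noncomputable def MT (K : SC α) (i : ℕ) : ℕ :=
  sSup {n | ∃ T ⊆ K.minNonFaces, T.card = i ∧ (T.sup id).card = n}

/-- The conjectured Taylor upper bound `(∏_{i=1}^{n-d} M̃_i(K))/(n-d)!` on `f_{d-1}(K)`. -/
noncomputable def taylorUBval (K : SC α) : ℚ :=
  (∏ i ∈ Finset.Icc 1 (K.verts.card - K.dimP1), (K.MT i : ℚ)) /
    (Nat.factorial (K.verts.card - K.dimP1))

/-- The conjectured Taylor lower bound `(∏_{i=1}^{n-d} m̃_i(K))/(n-d)!` on `f_{d-1}(K)`. -/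
noncomputable def taylorLBval (K : SC α) : ℚ :=
  (∏ i ∈ Finset.Icc 1 (K.verts.card - K.dimP1), (K.mT i : ℚ)) /
    (Nat.factorial (K.verts.card - K.dimP1))

/-- `K` satisfies the Taylor upper bound: `f_{d-1}(K) ≤ (∏_{i=1}^{n-d} M̃_i(K))/(n-d)!`. -/
def TaylorUB (K : SC α) : Prop := (K.fCard K.dimP1 : ℚ) ≤ K.taylorUBval

/-- `K` satisfies the Taylor lower bound: `f_{d-1}(K) ≥ (∏_{i=1}^{n-d} m̃_i(K))/(n-d)!`. -/
def TaylorLB (K : SC α) : Prop := K.taylorLBval ≤ (K.fCard K.dimP1 : ℚ)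

/-- The induced subcomplex `K[W]`: the faces of `K` contained in `W`. -/
def induced (K : SC α) (W : Finset α) : SC α where
  verts := K.verts ∩ W
  faces := K.faces.filter (fun F => F ⊆ W)
  subset_verts := by
    intro F hF
    simp only [mem_filter] at hF
    exact subset_inter (K.subset_verts F hF.1) hF.2
  down_closed := by
    intro F hF G hG
    simp only [mem_filter] at hF ⊢
    exact ⟨K.down_closed F hF.1 G hG, hG.trans hF.2⟩
  singleton_mem := by
    intro v hv
    simp only [mem_inter] at hv
    simp only [mem_filter, singleton_subset_iff]
    exact ⟨K.singleton_mem v hv.1, hv.2⟩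

end SC



namespace SC

variable {α : Type*} [DecidableEq α]

lemma mem_minNonFaces' {K : SC α} {F : Finset α} :
    F ∈ K.minNonFaces ↔ F ⊆ K.verts ∧ F ∉ K.faces ∧ ∀ G ∈ F.powerset, G ≠ F → G ∈ K.faces := by
  simp only [minNonFaces, mem_filter, mem_powerset, and_assoc]

lemma exists_mnf_subset (K : SC α) : ∀ (n : ℕ) (F : Finset α), F.card ≤ n → F ⊆ K.verts →
    F ∉ K.faces → ∃ N ∈ K.minNonFaces, N ⊆ F := by
  intro n
  induction n with
  | zero =>
    intro F hc hv hf
    refine ⟨F, mem_minNonFaces'.mpr ⟨hv, hf, ?_⟩, subset_rfl⟩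
    intro G hG hne
    exfalso
    apply hne
    have hF : F = ∅ := card_eq_zero.mp (Nat.le_zero.mp hc)
    subst hF
    exact subset_empty.mp (mem_powerset.mp hG)
  | succ n ih =>
    intro F hc hv hf
    by_cases h : ∀ G ∈ F.powerset, G ≠ F → G ∈ K.faces
    · exact ⟨F, mem_minNonFaces'.mpr ⟨hv, hf, h⟩, subset_rfl⟩
    · push_neg at h
      obtain ⟨G, hG, hne, hGf⟩ := h
      have hGF : G ⊆ F := mem_powerset.mp hG
      have hcard : G.card ≤ n := by
        have := Finset.card_lt_card (ssubset_of_subset_of_ne hGF hne)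
        omega
      obtain ⟨N, hN, hNG⟩ := ih G hcard (hGF.trans hv) hGf
      exact ⟨N, hN, hNG.trans hGF⟩

lemma bddAbove_MTset (K : SC α) (i : ℕ) :
    BddAbove {n | ∃ T ⊆ K.minNonFaces, T.card = i ∧ (T.sup id).card = n} := by
  refine ⟨K.verts.card, ?_⟩
  rintro n ⟨T, hT, -, rfl⟩
  refine card_le_card (Finset.sup_le ?_)
  intro N hN
  exact (mem_minNonFaces'.mp (hT hN)).1

lemma MT_zero (K : SC α) : K.MT 0 = 0 := by
  unfold MT
  have h : {n | ∃ T ⊆ K.minNonFaces, T.card = 0 ∧ (T.sup id).card = n} = {0} := by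
    ext n
    constructor
    · rintro ⟨T, -, hT, rfl⟩
      simp [card_eq_zero.mp hT]
    · rintro rfl
      exact ⟨∅, empty_subset _, card_empty, by simp⟩
  rw [h]
  exact csSup_singleton 0

lemma MT_le_of_mnf_subset {K K' : SC α} (h : K.minNonFaces ⊆ K'.minNonFaces) (i : ℕ) :
    K.MT i ≤ K'.MT i := by
  unfold MT
  by_cases hne : {n | ∃ T ⊆ K.minNonFaces, T.card = i ∧ (T.sup id).card = n}.Nonempty
  · refine csSup_le_csSup (bddAbove_MTset K' i) hne ?_
    rintro n ⟨T, hT, h1, h2⟩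
    exact ⟨T, fun x hx => h (hT hx), h1, h2⟩
  · rw [Set.not_nonempty_iff_eq_empty.mp hne, csSup_empty]
    exact Nat.zero_le _

lemma minNonFaces_induced_subset (K : SC α) (V : Finset α) :
    (K.induced V).minNonFaces ⊆ K.minNonFaces := by
  intro F hF
  rw [mem_minNonFaces'] at hF ⊢
  obtain ⟨hv, hnf, hmin⟩ := hF
  have hFV : F ⊆ V := hv.trans inter_subset_right
  refine ⟨hv.trans inter_subset_left, ?_, ?_⟩
  · intro hc
    exact hnf (mem_filter.mpr ⟨hc, hFV⟩)
  · intro G hG hne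
    exact (mem_filter.mp (hmin G hG hne)).1

lemma le_MT (K : SC α) {d i : ℕ} (hd : 1 ≤ d) (hdim : K.dimP1 = d)
    (hi1 : 1 ≤ i) (hi : i ≤ K.verts.card - d) : i + 1 ≤ K.MT i := by
  classical
  have hfne : K.faces.Nonempty := by
    by_contra h
    rw [not_nonempty_iff_eq_empty] at h
    rw [dimP1, h] at hdim
    simp at hdim
    omega
  obtain ⟨F, hF, hFd⟩ := Finset.exists_mem_eq_sup _ hfne Finset.card
  have hFv : F ⊆ K.verts := K.subset_verts F hF
  have hFcard : F.card = d := by rw [dimP1] at hdim; omega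
  have hWcard : (K.verts \ F).card = K.verts.card - d := by rw [card_sdiff_of_subset hFv, hFcard]
  obtain ⟨W₀, hW₀W, hW₀card⟩ := Finset.exists_subset_card_eq
    (show i ≤ (K.verts \ F).card by omega)
  have hkey : ∀ v ∈ K.verts \ F, ∃ N, N ∈ K.minNonFaces ∧ N ⊆ insert v F ∧ v ∈ N := by
    intro v hv
    have hvF : v ∉ F := (mem_sdiff.mp hv).2
    have hvV : v ∈ K.verts := (mem_sdiff.mp hv).1
    have hins : insert v F ∉ K.faces := by
      intro hc
      have h1 : (insert v F).card ≤ K.dimP1 := Finset.le_sup hc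
      rw [card_insert_of_notMem hvF, hFcard, hdim] at h1
      omega
    obtain ⟨N, hN, hNsub⟩ := K.exists_mnf_subset (insert v F).card (insert v F) le_rfl
      (insert_subset hvV hFv) hins
    refine ⟨N, hN, hNsub, ?_⟩
    by_contra hvN
    have hNF : N ⊆ F := by
      intro x hx
      rcases mem_insert.mp (hNsub hx) with rfl | h
      · exact absurd hx hvN
      · exact h
    exact (mem_minNonFaces'.mp hN).2.1 (K.down_closed F hF N hNF)
  set g : α → Finset α := fun v => if h : v ∈ K.verts \ F then (hkey v h).choose else ∅ with hg
  have hgspec : ∀ v ∈ K.verts \ F, g v ∈ K.minNonFaces ∧ g v ⊆ insert v F ∧ v ∈ g v := by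
    intro v hv
    rw [hg]
    simp only [dif_pos hv]
    exact (hkey v hv).choose_spec
  have hTsub : W₀.image g ⊆ K.minNonFaces := by
    intro N hN
    rw [mem_image] at hN
    obtain ⟨v, hv, rfl⟩ := hN
    exact (hgspec v (hW₀W hv)).1
  have hinj : Set.InjOn g W₀ := by
    intro v hv w hw hvw
    by_contra hne
    have h1 := (hgspec w (hW₀W hw)).2.2
    rw [← hvw] at h1
    have h2 := (hgspec v (hW₀W hv)).2.1 h1
    have hwF : w ∉ F := (mem_sdiff.mp (hW₀W hw)).2
    rcases mem_insert.mp h2 with h | h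
    · exact hne h.symm
    · exact hwF h
  have hTcard : (W₀.image g).card = i := by rw [Finset.card_image_of_injOn hinj, hW₀card]
  obtain ⟨v₀, hv₀⟩ := Finset.card_pos.mp (show 0 < W₀.card by omega)
  have hN₀ := hgspec v₀ (hW₀W hv₀)
  have h2card : 2 ≤ (g v₀).card := by
    by_contra h
    push_neg at h
    have hnf := (mem_minNonFaces'.mp hN₀.1).2.1
    have hc01 : (g v₀).card = 0 ∨ (g v₀).card = 1 := by omega
    rcases hc01 with hc | hc
    · exact hnf (by rw [card_eq_zero.mp hc]; exact K.down_closed F hF ∅ (empty_subset F))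
    · obtain ⟨x, hx⟩ := card_eq_one.mp hc
      have hxv : x ∈ K.verts := (mem_minNonFaces'.mp hN₀.1).1 (hx ▸ mem_singleton_self x)
      exact hnf (hx ▸ K.singleton_mem x hxv)
  obtain ⟨u, hu, hune⟩ : ∃ u ∈ g v₀, u ≠ v₀ := by
    by_contra h
    push_neg at h
    have hsub : g v₀ ⊆ {v₀} := fun x hx => mem_singleton.mpr (h x hx)
    have := card_le_card hsub
    simp at this
    omega
  have huF : u ∈ F := by
    rcases mem_insert.mp (hN₀.2.1 hu) with h | h
    · exact absurd h hune
    · exact h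
  have hsub : insert u W₀ ⊆ (W₀.image g).sup id := by
    intro x hx
    rcases mem_insert.mp hx with rfl | hx
    · exact (Finset.le_sup (f := id) (mem_image_of_mem g hv₀) : g v₀ ⊆ (W₀.image g).sup id) hu
    · exact (Finset.le_sup (f := id) (mem_image_of_mem g hx) :
        g x ⊆ (W₀.image g).sup id) ((hgspec x (hW₀W hx)).2.2)
  have hcard2 : i + 1 ≤ ((W₀.image g).sup id).card := by
    have h1 : (insert u W₀).card = i + 1 := by
      rw [card_insert_of_notMem, hW₀card]
      intro hc
      exact (mem_sdiff.mp (hW₀W hc)).2 huF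
    calc i + 1 = (insert u W₀).card := h1.symm
    _ ≤ _ := card_le_card hsub
  calc i + 1 ≤ ((W₀.image g).sup id).card := hcard2
  _ ≤ K.MT i := le_csSup (bddAbove_MTset K i) ⟨W₀.image g, hTsub, hTcard, rfl⟩

lemma fCard_eq_zero_of_lt {K : SC α} {j : ℕ} (h : K.dimP1 < j) : K.fCard j = 0 := by
  rw [fCard, card_eq_zero, filter_eq_empty_iff]
  intro F hF hc
  have : F.card ≤ K.dimP1 := Finset.le_sup hF
  omega

lemma eq_of_verts_faces {K K' : SC α} (h1 : K.verts = K'.verts) (h2 : K.faces = K'.faces) :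
    K = K' := by
  cases K
  cases K'
  simp only at h1 h2
  subst h1
  subst h2
  rfl

lemma induced_eq_self {K : SC α} {V : Finset α} (h : K.verts ⊆ V) : K.induced V = K := by
  refine eq_of_verts_faces ?_ ?_
  · exact inter_eq_left.mpr h
  · exact filter_true_of_mem fun F hF => (K.subset_verts F hF).trans h

lemma prod_Ioc_id_factorial (n : ℕ) : ∏ i ∈ Finset.Ioc 0 n, i = n.factorial := by
  induction n with
  | zero => simp
  | succ n ih =>
    rw [Finset.prod_Ioc_succ_top (Nat.zero_le _), ih, Nat.factorial_succ, mul_comm]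

lemma key_lemma (M : ℕ → ℕ) (s a t : ℕ) (ha : a + 1 ≤ s)
    (hM : ∀ i, a < i → i < s → i + 1 ≤ M i) (hMs : M s = s + t + 1) :
    (∏ i ∈ Finset.Icc 1 a, M i) * (s.factorial * (s + t + 1)) ≤
      (∏ i ∈ Finset.Icc 1 s, M i) * (a.factorial * (a + 1)) := by
  obtain ⟨s', rfl⟩ : ∃ s', s = s' + 1 := ⟨s - 1, by omega⟩
  rw [show Finset.Icc 1 a = Finset.Ioc 0 a from Finset.Icc_add_one_left_eq_Ioc 0 a,
    show Finset.Icc 1 (s' + 1) = Finset.Ioc 0 (s' + 1) from Finset.Icc_add_one_left_eq_Ioc 0 _]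
  have hsplit : (∏ i ∈ Finset.Ioc 0 (s' + 1), M i) =
      (∏ i ∈ Finset.Ioc 0 a, M i) * ∏ i ∈ Finset.Ioc a (s' + 1), M i :=
    (Finset.prod_Ioc_consecutive M (Nat.zero_le a) (by omega)).symm
  have htop : (∏ i ∈ Finset.Ioc a (s' + 1), M i) =
      (∏ i ∈ Finset.Ioc a s', M i) * M (s' + 1) :=
    Finset.prod_Ioc_succ_top (by omega) M
  have hre : (∏ i ∈ Finset.Ioc (a + 1) (s' + 1), i) = ∏ i ∈ Finset.Ioc a s', (i + 1) := by
    rw [← Finset.map_add_right_Ioc a s' 1, Finset.prod_map]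
    rfl
  have hbound : (∏ i ∈ Finset.Ioc (a + 1) (s' + 1), i) ≤ ∏ i ∈ Finset.Ioc a s', M i := by
    rw [hre]
    apply Finset.prod_le_prod'
    intro i hi
    rw [Finset.mem_Ioc] at hi
    exact hM i hi.1 (by omega)
  have hfact : (∏ i ∈ Finset.Ioc (a + 1) (s' + 1), i) * (a + 1).factorial =
      (s' + 1).factorial := by
    rw [← prod_Ioc_id_factorial (s' + 1), ← prod_Ioc_id_factorial (a + 1), mul_comm]
    exact Finset.prod_Ioc_consecutive _ (Nat.zero_le _) (by omega)
  rw [hsplit, htop, hMs]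
  calc (∏ i ∈ Finset.Ioc 0 a, M i) * ((s' + 1).factorial * (s' + 1 + t + 1))
      = (∏ i ∈ Finset.Ioc 0 a, M i) *
        ((∏ i ∈ Finset.Ioc (a + 1) (s' + 1), i) * (a + 1).factorial * (s' + 1 + t + 1)) := by
        rw [hfact]
    _ ≤ (∏ i ∈ Finset.Ioc 0 a, M i) *
        ((∏ i ∈ Finset.Ioc a s', M i) * (a + 1).factorial * (s' + 1 + t + 1)) := by
        gcongr
    _ = (∏ i ∈ Finset.Ioc 0 a, M i) * ((∏ i ∈ Finset.Ioc a s', M i) * (s' + 1 + t + 1)) *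
        (a.factorial * (a + 1)) := by
        rw [Nat.factorial_succ]
        ring

lemma fCard_union_le (Khat : SC α) (V V' : Finset α)
    (hcover : ∀ F ∈ Khat.faces, F ⊆ V ∨ F ⊆ V') (j : ℕ) :
    Khat.fCard j ≤ (Khat.induced V).fCard j + (Khat.induced V').fCard j := by
  unfold fCard
  calc (Khat.faces.filter (fun F => F.card = j)).card
      ≤ ((((Khat.induced V).faces).filter (fun F => F.card = j)) ∪
          (((Khat.induced V').faces).filter (fun F => F.card = j))).card := by
        apply card_le_card
        intro F hF
        rw [mem_filter] at hF
        rw [mem_union, mem_filter, mem_filter]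
        rcases hcover F hF.1 with h | h
        · exact Or.inl ⟨mem_filter.mpr ⟨hF.1, h⟩, hF.2⟩
        · exact Or.inr ⟨mem_filter.mpr ⟨hF.1, h⟩, hF.2⟩
    _ ≤ _ := card_union_le _ _

end SC
set_option maxHeartbeats 1000000 in
open SC in
/-- If `K̂` is covered by induced subcomplexes `K̂[V]` and `K̂[V']` which both satisfy the
Taylor upper bound, and `|V ∩ V'| ≤ t + d - 1` where
`t = M̃_{n̂-d}(K̂) - (n̂-d) - 1 ≥ 0`, then `K̂` satisfies the Taylor upper bound. -/
theorem taylorUB_union {α : Type*} [DecidableEq α] (Khat : SC α) (V V' : Finset α)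
    (d : ℕ) (hd : 1 ≤ d) (hdim : Khat.dimP1 = d)
    (hV : Khat.verts = V ∪ V')
    (hcover : ∀ F ∈ Khat.faces, F ⊆ V ∨ F ⊆ V')
    (hK : TaylorUB (Khat.induced V)) (hK' : TaylorUB (Khat.induced V'))
    (t : ℕ)
    (ht : Khat.MT (Khat.verts.card - d) = (Khat.verts.card - d) + t + 1)
    (hint : (V ∩ V').card ≤ t + d - 1) :
    TaylorUB Khat := by
  classical
  -- basic facts
  have hfne : Khat.faces.Nonempty := by
    by_contra h
    rw [Finset.not_nonempty_iff_eq_empty] at h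
    rw [SC.dimP1, h] at hdim
    simp at hdim
    omega
  have hdn : d ≤ Khat.verts.card := by
    obtain ⟨F, hF, hFd⟩ := Finset.exists_mem_eq_sup _ hfne Finset.card
    have h1 := Finset.card_le_card (Khat.subset_verts F hF)
    rw [SC.dimP1] at hdim
    omega
  have hs1 : 1 ≤ Khat.verts.card - d := by
    by_contra h
    have h0 : Khat.verts.card - d = 0 := by omega
    rw [h0, SC.MT_zero] at ht
    omega
  by_cases hcV : Khat.verts ⊆ V
  · rwa [SC.induced_eq_self hcV] at hK
  by_cases hcV' : Khat.verts ⊆ V'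
  · rwa [SC.induced_eq_self hcV'] at hK'
  -- Case 3: both proper
  have hnV : (Khat.induced V).verts.card < Khat.verts.card := by
    apply Finset.card_lt_card
    refine Finset.ssubset_iff_subset_ne.mpr ⟨Finset.inter_subset_left, ?_⟩
    intro h
    exact hcV (Finset.inter_eq_left.mp h)
  have hnV' : (Khat.induced V').verts.card < Khat.verts.card := by
    apply Finset.card_lt_card
    refine Finset.ssubset_iff_subset_ne.mpr ⟨Finset.inter_subset_left, ?_⟩
    intro h
    exact hcV' (Finset.inter_eq_left.mp h)
  set s := Khat.verts.card - d with hs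
  -- per-side bound
  have side : ∀ (W : Finset α), (Khat.induced W).verts.card < Khat.verts.card →
      TaylorUB (Khat.induced W) →
      (Khat.induced W).fCard d * (s.factorial * (s + t + 1)) ≤
        (∏ i ∈ Finset.Icc 1 s, Khat.MT i) * (((Khat.induced W).verts.card - d) + 1) := by
    intro W hW hUB
    set aW := (Khat.induced W).verts.card - d with haW
    have haW1 : aW + 1 ≤ s := by omega
    rcases Nat.lt_or_ge (Khat.induced W).dimP1 d with hdW | hdW
    · rw [SC.fCard_eq_zero_of_lt hdW]
      simp
    · have hdWe : (Khat.induced W).dimP1 = d := by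
        have hle : (Khat.induced W).dimP1 ≤ Khat.dimP1 :=
          Finset.sup_mono (Finset.filter_subset _ _)
        omega
      rw [TaylorUB, taylorUBval, hdWe] at hUB
      have hfa : (Khat.induced W).fCard d * aW.factorial ≤
          ∏ i ∈ Finset.Icc 1 aW, (Khat.induced W).MT i := by
        have h2 := (le_div_iff₀ (by positivity : (0:ℚ) < (aW.factorial : ℚ))).mp hUB
        exact_mod_cast h2
      have hMle : (∏ i ∈ Finset.Icc 1 aW, (Khat.induced W).MT i) ≤
          ∏ i ∈ Finset.Icc 1 aW, Khat.MT i :=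
        Finset.prod_le_prod' fun i _ =>
          SC.MT_le_of_mnf_subset (SC.minNonFaces_induced_subset Khat W) i
      have hkey := SC.key_lemma Khat.MT s aW t haW1
        (fun i h1 h2 => Khat.le_MT hd hdim (by omega) (by omega)) ht
      have c2 : (Khat.induced W).fCard d * aW.factorial * (s.factorial * (s + t + 1)) ≤
          (∏ i ∈ Finset.Icc 1 s, Khat.MT i) * (aW.factorial * (aW + 1)) :=
        le_trans (Nat.mul_le_mul_right _ (le_trans hfa hMle)) hkey
      have c3 : ((Khat.induced W).fCard d * (s.factorial * (s + t + 1))) * aW.factorial ≤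
          ((∏ i ∈ Finset.Icc 1 s, Khat.MT i) * (aW + 1)) * aW.factorial := by
        calc ((Khat.induced W).fCard d * (s.factorial * (s + t + 1))) * aW.factorial
            = (Khat.induced W).fCard d * aW.factorial * (s.factorial * (s + t + 1)) := by ring
          _ ≤ (∏ i ∈ Finset.Icc 1 s, Khat.MT i) * (aW.factorial * (aW + 1)) := c2
          _ = ((∏ i ∈ Finset.Icc 1 s, Khat.MT i) * (aW + 1)) * aW.factorial := by ring
      exact Nat.le_of_mul_le_mul_right c3 (Nat.factorial_pos aW)
  have hVle := side V hnV hK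
  have hV'le := side V' hnV' hK'
  -- coefficient bound
  have hcards : (Khat.induced V).verts.card + (Khat.induced V').verts.card ≤
      Khat.verts.card + (V ∩ V').card := by
    have h1 := Finset.card_union_add_card_inter (Khat.verts ∩ V) (Khat.verts ∩ V')
    have h2 : Khat.verts ∩ V ∪ Khat.verts ∩ V' = Khat.verts := by
      rw [← Finset.inter_union_distrib_left, ← hV, Finset.inter_self]
    have h3 : (Khat.verts ∩ V ∩ (Khat.verts ∩ V')).card ≤ (V ∩ V').card := by
      apply Finset.card_le_card
      intro x hx
      simp only [Finset.mem_inter] at hx ⊢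
      exact ⟨hx.1.2, hx.2.2⟩
    have h4 : (Khat.induced V).verts = Khat.verts ∩ V := rfl
    have h5 : (Khat.induced V').verts = Khat.verts ∩ V' := rfl
    rw [h4, h5]
    rw [h2] at h1
    omega
  have hcoef : ((Khat.induced V).verts.card - d) + ((Khat.induced V').verts.card - d) + 2
      ≤ s + t + 1 := by
    have haV1 : ((Khat.induced V).verts.card - d) + 1 ≤ s := by omega
    have haV'1 : ((Khat.induced V').verts.card - d) + 1 ≤ s := by omega
    omega
  have hcov := SC.fCard_union_le Khat V V' hcover d
  have main : Khat.fCard d * s.factorial ≤ ∏ i ∈ Finset.Icc 1 s, Khat.MT i := by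
    have h1 : Khat.fCard d * (s.factorial * (s + t + 1)) ≤
        (∏ i ∈ Finset.Icc 1 s, Khat.MT i) * (s + t + 1) := by
      calc Khat.fCard d * (s.factorial * (s + t + 1))
          ≤ ((Khat.induced V).fCard d + (Khat.induced V').fCard d) *
              (s.factorial * (s + t + 1)) := Nat.mul_le_mul_right _ hcov
        _ = (Khat.induced V).fCard d * (s.factorial * (s + t + 1)) +
              (Khat.induced V').fCard d * (s.factorial * (s + t + 1)) := by ring
        _ ≤ (∏ i ∈ Finset.Icc 1 s, Khat.MT i) * (((Khat.induced V).verts.card - d) + 1) +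
              (∏ i ∈ Finset.Icc 1 s, Khat.MT i) * (((Khat.induced V').verts.card - d) + 1) :=
            Nat.add_le_add hVle hV'le
        _ = (∏ i ∈ Finset.Icc 1 s, Khat.MT i) *
              (((Khat.induced V).verts.card - d) + ((Khat.induced V').verts.card - d) + 2) := by
            ring
        _ ≤ (∏ i ∈ Finset.Icc 1 s, Khat.MT i) * (s + t + 1) :=
            Nat.mul_le_mul_left _ hcoef
    have h2 : (Khat.fCard d * s.factorial) * (s + t + 1) ≤
        (∏ i ∈ Finset.Icc 1 s, Khat.MT i) * (s + t + 1) := by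
      calc (Khat.fCard d * s.factorial) * (s + t + 1)
          = Khat.fCard d * (s.factorial * (s + t + 1)) := by ring
        _ ≤ _ := h1
    exact Nat.le_of_mul_le_mul_right h2 (by omega)
  rw [TaylorUB, taylorUBval, hdim, ← hs]
  rw [le_div_iff₀ (by positivity : (0:ℚ) < (s.factorial : ℚ))]
  exact_mod_cast main
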